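/- There exists a unique number s ≥ 0 such that liminf_{k→∞} ∑_{(j_1,…,j_k) ∈ L^k} (r_{j_1}⋯r_{j_k})^t = ∞ for every t with 0 ≤ t < s, and liminf_{k→∞} ∑_{(j_1,…,j_k) ∈ L^k} (r_{j_1}⋯r_{j_k})^t = 0 for every t > s. -/

import Mathlib

open Filter Set
open scoped ENNReal Topology

/-- The index set `L^k = N_1 × ⋯ × N_k`, realized as the finset of functions
`j : Fin k → Fin m` whose `i`-th component lies in `N (i+1)`. -/
def Lk {m : ℕ} (N : ℕ → Finset (Fin m)) (k : ℕ) : Finset (Fin k → Fin m) :=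
  Finset.univ.filter fun j => ∀ i : Fin k, j i ∈ N (i + 1)

noncomputable def Fsum {m : ℕ} (r : Fin m → ℝ) (N : ℕ → Finset (Fin m)) (t : ℝ) (k : ℕ) :
    ℝ≥0∞ :=
  ∑ j ∈ Lk N k, ENNReal.ofReal ((∏ i, r (j i)) ^ t)

section Aux
variable {m : ℕ} {r : Fin m → ℝ} {N : ℕ → Finset (Fin m)} {R : ℝ}

lemma myprod_pos (hr : ∀ j, 0 < r j ∧ r j < 1) {k : ℕ} (j : Fin k → Fin m) :
    0 < ∏ i, r (j i) :=
  Finset.prod_pos fun i _ => (hr (j i)).1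

lemma myprod_le (hr : ∀ j, 0 < r j ∧ r j < 1) (hle : ∀ j, r j ≤ R) {k : ℕ} (j : Fin k → Fin m) :
    ∏ i, r (j i) ≤ R ^ k := by
  calc ∏ i, r (j i) ≤ ∏ _i : Fin k, R :=
        Finset.prod_le_prod (fun i _ => (hr (j i)).1.le) (fun i _ => hle (j i))
    _ = R ^ k := by simp

lemma pow_rpow_comm (hR0 : 0 < R) (k : ℕ) (δ : ℝ) : ((R : ℝ) ^ k) ^ δ = (R ^ δ) ^ k := by
  rw [← Real.rpow_natCast R k, ← Real.rpow_natCast (R ^ δ) k, ← Real.rpow_mul hR0.le,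
    ← Real.rpow_mul hR0.le, mul_comm]

lemma key_le (hr : ∀ j, 0 < r j ∧ r j < 1) (hR0 : 0 < R) (hle : ∀ j, r j ≤ R)
    (t δ : ℝ) (hδ : 0 ≤ δ) (k : ℕ) :
    Fsum r N (t + δ) k ≤ ENNReal.ofReal ((R ^ δ) ^ k) * Fsum r N t k := by
  unfold Fsum
  rw [Finset.mul_sum]
  refine Finset.sum_le_sum fun j _ => ?_
  have hP := myprod_pos hr j
  have h1 : (∏ i, r (j i)) ^ δ ≤ (R ^ δ) ^ k := by
    rw [← pow_rpow_comm hR0 k δ]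
    exact Real.rpow_le_rpow hP.le (myprod_le hr hle j) hδ
  rw [Real.rpow_add hP, ← ENNReal.ofReal_mul (by positivity)]
  refine ENNReal.ofReal_le_ofReal ?_
  rw [mul_comm ((R ^ δ) ^ k)]
  exact mul_le_mul_of_nonneg_left h1 (Real.rpow_nonneg hP.le t)

lemma tendsto_ofReal_pow {a : ℝ} (ha0 : 0 ≤ a) (ha1 : a < 1) :
    Tendsto (fun k : ℕ => ENNReal.ofReal (a ^ k)) atTop (𝓝 0) := by
  have h := tendsto_pow_atTop_nhds_zero_of_lt_one ha0 ha1
  have := (ENNReal.continuous_ofReal.tendsto 0).comp h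
  simpa [Function.comp_def] using this

/-- Claim A -/
lemma auxA (hr : ∀ j, 0 < r j ∧ r j < 1) (hR0 : 0 < R) (hR1 : R < 1) (hle : ∀ j, r j ≤ R)
    {t t' : ℝ} (h : t < t') (hfin : liminf (Fsum r N t) atTop ≠ ⊤) :
    liminf (Fsum r N t') atTop = 0 := by
  set δ := t' - t with hδdef
  have hδ0 : 0 < δ := sub_pos.2 h
  have ht' : t' = t + δ := by ring
  set C := liminf (Fsum r N t) atTop with hC
  have hC1 : C + 1 ≠ 0 := by simp
  have hC1t : C + 1 ≠ ⊤ := by simp [ENNReal.add_ne_top, hfin]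
  have hfreq : ∃ᶠ k in atTop, Fsum r N t k < C + 1 :=
    frequently_lt_of_liminf_lt (by isBoundedDefault) (ENNReal.lt_add_right hfin one_ne_zero)
  refine le_antisymm (ENNReal.le_of_forall_pos_le_add fun ε hε _ => ?_) zero_le
  have hεC : (0 : ℝ≥0∞) < (ε : ℝ≥0∞) / (C + 1) :=
    ENNReal.div_pos (by exact_mod_cast hε.ne') hC1t
  have hg : ∀ᶠ k in atTop, ENNReal.ofReal ((R ^ δ) ^ k) < (ε : ℝ≥0∞) / (C + 1) :=
    (tendsto_ofReal_pow (Real.rpow_nonneg hR0.le δ)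
      (Real.rpow_lt_one hR0.le hR1 hδ0)).eventually_lt_const hεC
  have hcomb := hfreq.and_eventually hg
  have hlim : liminf (Fsum r N t') atTop ≤ (ε : ℝ≥0∞) := by
    refine liminf_le_of_frequently_le' (hcomb.mono fun k ⟨h1, h2⟩ => ?_)
    calc Fsum r N t' k ≤ ENNReal.ofReal ((R ^ δ) ^ k) * Fsum r N t k := by
          rw [ht']; exact key_le hr hR0 hle t δ hδ0.le k
      _ ≤ (ε : ℝ≥0∞) / (C + 1) * (C + 1) := mul_le_mul' h2.le h1.le
      _ = (ε : ℝ≥0∞) := ENNReal.div_mul_cancel hC1 hC1t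
  simpa using hlim

/-- Claim B -/
lemma auxB (hr : ∀ j, 0 < r j ∧ r j < 1) (hR0 : 0 < R) (hR1 : R < 1) (hle : ∀ j, r j ≤ R)
    {t t' : ℝ} (h : t' < t) (hne : liminf (Fsum r N t) atTop ≠ 0) :
    liminf (Fsum r N t') atTop = ⊤ := by
  set δ := t - t' with hδdef
  have hδ0 : 0 < δ := sub_pos.2 h
  have ht : t = t' + δ := by ring
  obtain ⟨c, hc0, hcl⟩ := exists_between (pos_iff_ne_zero.mpr hne)
  have hev : ∀ᶠ k in atTop, c < Fsum r N t k := eventually_lt_of_lt_liminf hcl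
  have hdiv : ∀ᶠ k in atTop,
      c / ENNReal.ofReal ((R ^ δ) ^ k) ≤ Fsum r N t' k := by
    refine hev.mono fun k hk => ?_
    have h1 : Fsum r N t k ≤ Fsum r N t' k * ENNReal.ofReal ((R ^ δ) ^ k) := by
      rw [ht, mul_comm]; exact key_le hr hR0 hle t' δ hδ0.le k
    calc c / ENNReal.ofReal ((R ^ δ) ^ k)
        ≤ Fsum r N t k / ENNReal.ofReal ((R ^ δ) ^ k) := ENNReal.div_le_div_right hk.le _
      _ ≤ Fsum r N t' k := ENNReal.div_le_of_le_mul h1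
  have htend : Tendsto (fun k : ℕ => c / ENNReal.ofReal ((R ^ δ) ^ k)) atTop (𝓝 ⊤) := by
    have h1 := (tendsto_ofReal_pow (Real.rpow_nonneg hR0.le δ)
      (Real.rpow_lt_one hR0.le hR1 hδ0)).inv
    rw [ENNReal.inv_zero] at h1
    have h2 := ENNReal.Tendsto.const_mul (a := c) h1 (Or.inl (by simp))
    rw [ENNReal.mul_top hc0.ne'] at h2
    simpa [div_eq_mul_inv] using h2
  rw [← top_le_iff]
  calc (⊤ : ℝ≥0∞) = liminf (fun k : ℕ => c / ENNReal.ofReal ((R ^ δ) ^ k)) atTop :=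
        htend.liminf_eq.symm
    _ ≤ liminf (Fsum r N t') atTop := liminf_le_liminf hdiv

/-- some exponent gives liminf zero -/
lemma auxZ (hr : ∀ j, 0 < r j ∧ r j < 1) (hm : 0 < m) (hR0 : 0 < R) (hR1 : R < 1)
    (hle : ∀ j, r j ≤ R) :
    ∃ t : ℝ, 0 ≤ t ∧ liminf (Fsum r N t) atTop = 0 := by
  obtain ⟨n, hn⟩ := exists_pow_lt_of_lt_one (x := 1 / (m : ℝ)) (by positivity) hR1
  refine ⟨n, Nat.cast_nonneg n, ?_⟩
  have hmR : (m : ℝ) * R ^ (n : ℝ) < 1 := by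
    rw [Real.rpow_natCast]
    rw [div_eq_inv_mul, mul_one] at hn
    calc (m : ℝ) * R ^ n < (m : ℝ) * (m : ℝ)⁻¹ := by
          exact mul_lt_mul_of_pos_left hn (by exact_mod_cast hm)
      _ = 1 := mul_inv_cancel₀ (by positivity)
  have hmR0 : 0 ≤ (m : ℝ) * R ^ (n : ℝ) := by positivity
  have hbound : ∀ k, Fsum r N (n : ℝ) k ≤ ENNReal.ofReal (((m : ℝ) * R ^ (n : ℝ)) ^ k) := by
    intro k
    unfold Fsum
    calc ∑ j ∈ Lk N k, ENNReal.ofReal ((∏ i, r (j i)) ^ (n : ℝ))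
        ≤ ∑ _j ∈ Lk N k, ENNReal.ofReal ((R ^ ((n : ℕ) : ℝ)) ^ k) := by
          refine Finset.sum_le_sum fun j _ => ENNReal.ofReal_le_ofReal ?_
          rw [← pow_rpow_comm hR0 k (n : ℝ)]
          exact Real.rpow_le_rpow (myprod_pos hr j).le (myprod_le hr hle j) (Nat.cast_nonneg n)
      _ = (Lk N k).card * ENNReal.ofReal ((R ^ ((n : ℕ) : ℝ)) ^ k) := by
          rw [Finset.sum_const, nsmul_eq_mul]
      _ ≤ (m ^ k : ℕ) * ENNReal.ofReal ((R ^ ((n : ℕ) : ℝ)) ^ k) := by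
          refine mul_le_mul_left ?_ _
          have : (Lk N k).card ≤ m ^ k := by
            simpa [Fintype.card_fun] using Finset.card_le_univ (Lk N k)
          exact_mod_cast this
      _ = ENNReal.ofReal (((m : ℝ) * R ^ ((n : ℕ) : ℝ)) ^ k) := by
          rw [mul_pow, ENNReal.ofReal_mul (by positivity)]
          congr 1
          rw [← ENNReal.ofReal_natCast (m ^ k)]
          push_cast
          ring_nf
  refine le_antisymm ?_ zero_le
  have hlim0 : liminf (fun k : ℕ => ENNReal.ofReal (((m : ℝ) * R ^ (n : ℝ)) ^ k)) atTop = 0 :=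
    (tendsto_ofReal_pow hmR0 hmR).liminf_eq
  calc liminf (Fsum r N (n : ℝ)) atTop
      ≤ liminf (fun k : ℕ => ENNReal.ofReal (((m : ℝ) * R ^ (n : ℝ)) ^ k)) atTop :=
        liminf_le_liminf (Eventually.of_forall hbound)
    _ = 0 := hlim0

end Aux

/-- There exists a unique `s ≥ 0` such that
`liminf_{k→∞} ∑_{(j_1,…,j_k) ∈ L^k} (r_{j_1}⋯r_{j_k})^t` is `∞` for `0 ≤ t < s`
and `0` for `t > s`. -/
theorem stmt5 {m : ℕ} (r : Fin m → ℝ) (hr : ∀ j, 0 < r j ∧ r j < 1)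
    (N : ℕ → Finset (Fin m)) (hN : ∀ k, 1 ≤ k → (N k).Nonempty) :
    ∃! s : ℝ, 0 ≤ s ∧
      (∀ t : ℝ, 0 ≤ t → t < s →
        liminf (fun k => ∑ j ∈ Lk N k, ENNReal.ofReal ((∏ i, r (j i)) ^ t)) atTop = ⊤) ∧
      (∀ t : ℝ, s < t →
        liminf (fun k => ∑ j ∈ Lk N k, ENNReal.ofReal ((∏ i, r (j i)) ^ t)) atTop = 0) := by
  rcases Nat.eq_zero_or_pos m with hm | hm
  · subst hm
    obtain ⟨j, -⟩ := hN 1 le_rfl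
    exact j.elim0
  obtain ⟨j₀, -, hj₀⟩ := Finset.exists_max_image (Finset.univ : Finset (Fin m)) r
    ⟨⟨0, hm⟩, Finset.mem_univ _⟩
  set R := r j₀ with hRdef
  have hR0 : 0 < R := (hr j₀).1
  have hR1 : R < 1 := (hr j₀).2
  have hle : ∀ j, r j ≤ R := fun j => hj₀ j (Finset.mem_univ j)
  set Z : Set ℝ := {t | 0 ≤ t ∧ liminf (Fsum r N t) atTop = 0} with hZdef
  have hZne : Z.Nonempty := by
    obtain ⟨t, ht0, ht⟩ := auxZ (N := N) hr hm hR0 hR1 hle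
    exact ⟨t, ht0, ht⟩
  have hZbdd : BddBelow Z := ⟨0, fun t ht => ht.1⟩
  set s := sInf Z with hsdef
  have hs0 : 0 ≤ s := le_csInf hZne fun t ht => ht.1
  have hprop1 : ∀ t : ℝ, 0 ≤ t → t < s → liminf (Fsum r N t) atTop = ⊤ := by
    intro t ht0 hts
    have h1 : t < (t + s) / 2 := by linarith
    have h2 : (t + s) / 2 < s := by linarith
    have hnotZ : (t + s) / 2 ∉ Z := fun hmem => absurd (csInf_le hZbdd hmem) (not_le.2 h2)
    have hne : liminf (Fsum r N ((t + s) / 2)) atTop ≠ 0 := fun h0 =>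
      hnotZ ⟨by linarith, h0⟩
    exact auxB hr hR0 hR1 hle h1 hne
  have hprop2 : ∀ t : ℝ, s < t → liminf (Fsum r N t) atTop = 0 := by
    intro t hst
    obtain ⟨t₀, ht₀Z, ht₀⟩ := exists_lt_of_csInf_lt hZne hst
    exact auxA hr hR0 hR1 hle ht₀ (by rw [ht₀Z.2]; exact ENNReal.zero_ne_top)
  refine ⟨s, ⟨hs0, hprop1, hprop2⟩, ?_⟩
  rintro s' ⟨hs'0, hs'1, hs'2⟩
  by_contra hne
  rcases lt_or_gt_of_ne hne with hlt | hgt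
  · -- s' < s
    have h1 : liminf (Fsum r N ((s' + s) / 2)) atTop = 0 := hs'2 _ (by linarith)
    have h2 : liminf (Fsum r N ((s' + s) / 2)) atTop = ⊤ :=
      hprop1 _ (by linarith) (by linarith)
    rw [h1] at h2
    exact ENNReal.zero_ne_top h2
  · -- s < s'
    have h1 : liminf (Fsum r N ((s + s') / 2)) atTop = 0 := hprop2 _ (by linarith)
    have h2 : liminf (Fsum r N ((s + s') / 2)) atTop = ⊤ :=
      hs'1 _ (by linarith) (by linarith)
    rw [h1] at h2
    exact ENNReal.zero_ne_top h2
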